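/- For a Young diagram μ and μ ⋖ λ, |μ| · ∑_{ν : ν ⋖ μ} p↓(μ,ν) / (c(λ/μ) - c(μ/ν)) = c(λ/μ), i.e., the evaluation of z - H_μ(z) at the content z = c(λ/μ) of the box added to μ equals c(λ/μ) - 0; equivalently H_μ(c(λ/μ)) = 0. -/

import Mathlib

open Finset

namespace YG

/-- `Covers μ l` : the Young diagram `l` is obtained from `μ` by adding one box. -/
def Covers (μ l : YoungDiagram) : Prop := μ ≤ l ∧ l.card = μ.card + 1

/-- The content `j - i` of a cell `(i, j)`. -/
def content (c : ℕ × ℕ) : ℤ := (c.2 : ℤ) - (c.1 : ℤ)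

/-- The content of the unique box of `l \ μ` when `Covers μ l`. -/
def addedContent (μ l : YoungDiagram) : ℤ := ∑ c ∈ l.cells \ μ.cells, content c

/-- The removable corner cells of a Young diagram; their contents are the local
maxima `y_i` of the profile. -/
def removableCells (l : YoungDiagram) : Finset (ℕ × ℕ) :=
  l.cells.filter (fun c => (c.1, c.2 + 1) ∉ l ∧ (c.1 + 1, c.2) ∉ l)

/-- The addable cells of a Young diagram; their contents are the local minima `x_i`
of the profile. -/
def addableCells (l : YoungDiagram) : Finset (ℕ × ℕ) :=
  ((Finset.range (l.card + 1)) ×ˢ (Finset.range (l.card + 1))).filter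
    (fun c => c ∉ l ∧ (c.1 = 0 ∨ (c.1 - 1, c.2) ∈ l) ∧ (c.2 = 0 ∨ (c.1, c.2 - 1) ∈ l))

/-- The transition probability `p↑(l, ·)` at an addable content `x = x_i`:
`∏_j (x_i - y_j) / ∏_{j ≠ i} (x_i - x_j)`. -/
noncomputable def pUpAt (l : YoungDiagram) (x : ℤ) : ℝ :=
  (∏ r ∈ removableCells l, ((x : ℝ) - (content r : ℝ))) /
    (∏ a ∈ (addableCells l).filter (fun a => content a ≠ x), ((x : ℝ) - (content a : ℝ)))

/-- The cotransition probability `p↓(l, ·)` at a removable content `y = y_i`: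
`-(1/|l|) ∏_j (y_i - x_j) / ∏_{j ≠ i} (y_i - y_j)`. -/
noncomputable def pDownAt (l : YoungDiagram) (y : ℤ) : ℝ :=
  -(1 / (l.card : ℝ)) *
    ((∏ a ∈ addableCells l, ((y : ℝ) - (content a : ℝ))) /
      (∏ r ∈ (removableCells l).filter (fun r => content r ≠ y), ((y : ℝ) - (content r : ℝ))))

/-- `p↑(μ, l)` for `μ ⋖ l`. -/
noncomputable def pUp (μ l : YoungDiagram) : ℝ := pUpAt μ (addedContent μ l)

/-- `p↓(l, μ)` for `μ ⋖ l`. -/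
noncomputable def pDown (l μ : YoungDiagram) : ℝ := pDownAt l (addedContent μ l)

/-- The Plancherel harmonic function
`f_Pl(l) = (1/|l|!) ∏_{(i,j) ∈ l} (l_i + l'_j - i - j + 1)` (hook products, written with
0-based indices). -/
noncomputable def fPl (l : YoungDiagram) : ℝ :=
  (∏ c ∈ l.cells, ((l.rowLen c.1 : ℝ) + (l.colLen c.2 : ℝ) - (c.1 : ℝ) - (c.2 : ℝ) - 1)) /
    (Nat.factorial l.card : ℝ)

end YG

open YG Finset

section DDAux
open Finset

section DD
open Polynomial

lemma dd_aux {F : Type*} [Field F] {ι κ : Type*} [DecidableEq ι] (s : Finset ι) (t : Finset κ)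
    (v : ι → F) (w : κ → F) (hv : Set.InjOn v s) (hcard : t.card = s.card) (hne : s.Nonempty) :
    ∑ i ∈ s, (∏ k ∈ t, (v i - w k)) / ∏ j ∈ s.erase i, (v i - v j)
      = ∑ i ∈ s, v i - ∑ k ∈ t, w k := by
  classical
  set n := s.card with hn
  have hn0 : 0 < n := card_pos.mpr hne
  set P : F[X] := ∏ k ∈ t, (X - C (w k)) with hP
  set Q : F[X] := ∏ i ∈ s, (X - C (v i)) with hQ
  have hPm : P.Monic := monic_prod_of_monic _ _ fun k _ => monic_X_sub_C _
  have hQm : Q.Monic := monic_prod_of_monic _ _ fun i _ => monic_X_sub_C _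
  have hPd : P.natDegree = n := by
    rw [hP, natDegree_prod _ _ fun k _ => X_sub_C_ne_zero (w k)]
    simp [hcard]
  have hQd : Q.natDegree = n := by
    rw [hQ, natDegree_prod _ _ fun i _ => X_sub_C_ne_zero (v i)]
    simp [hn]
  set g : F[X] := P - Q with hg
  have hdeg : g.degree < (n : WithBot ℕ) := by
    have h1 : P.degree = Q.degree := by
      rw [degree_eq_natDegree hPm.ne_zero, degree_eq_natDegree hQm.ne_zero, hPd, hQd]
    have := degree_sub_lt h1 hPm.ne_zero (by rw [hPm.leadingCoeff, hQm.leadingCoeff])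
    rwa [degree_eq_natDegree hPm.ne_zero, hPd] at this
  have hinterp : g = Lagrange.interpolate s v fun i => g.eval (v i) :=
    Lagrange.eq_interpolate hv hdeg
  have hgev : ∀ i ∈ s, g.eval (v i) = ∏ k ∈ t, (v i - w k) := by
    intro i hi
    have : Q.eval (v i) = 0 := by
      rw [hQ, eval_prod]
      exact prod_eq_zero hi (by simp)
    simp [hg, eval_sub, this, hP, eval_prod]
  have hlhs : g.coeff (n - 1) = (-∑ k ∈ t, w k) - (-∑ i ∈ s, v i) := by
    have hPn : P.coeff (n - 1) = -∑ k ∈ t, w k := by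
      have := prod_X_sub_C_nextCoeff (s := t) w
      rwa [nextCoeff_of_natDegree_pos (by rw [hPd]; exact hn0), hPd] at this
    have hQn : Q.coeff (n - 1) = -∑ i ∈ s, v i := by
      have := prod_X_sub_C_nextCoeff (s := s) v
      rwa [nextCoeff_of_natDegree_pos (by rw [hQd]; exact hn0), hQd] at this
    rw [hg, coeff_sub, hPn, hQn]
  have hbasis : ∀ i ∈ s, (Lagrange.basis s v i).coeff (n - 1)
      = (∏ j ∈ s.erase i, (v i - v j))⁻¹ := by
    intro i hi
    have hnd : (Lagrange.basis s v i).natDegree = n - 1 := Lagrange.natDegree_basis hv hi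
    rw [← hnd, coeff_natDegree, Lagrange.basis, leadingCoeff_prod, ← prod_inv_distrib]
    refine prod_congr rfl fun j hj => ?_
    rw [Lagrange.basisDivisor]
    rw [leadingCoeff_mul, leadingCoeff_C, (monic_X_sub_C _).leadingCoeff, mul_one]
  have hrhs : g.coeff (n - 1)
      = ∑ i ∈ s, (∏ k ∈ t, (v i - w k)) * (∏ j ∈ s.erase i, (v i - v j))⁻¹ := by
    conv_lhs => rw [hinterp]
    rw [Lagrange.interpolate_apply, finset_sum_coeff]
    refine sum_congr rfl fun i hi => ?_
    rw [coeff_C_mul, hbasis i hi, hgev i hi]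
  have heq := hlhs.symm.trans hrhs
  simp only [div_eq_mul_inv]
  rw [← heq]
  ring

end DD

section
open Finset

section YGAux

lemma content_mk (i j : ℕ) : content (i, j) = (j : ℤ) - (i : ℤ) := rfl

lemma yg_colLen_le_card (μ : YoungDiagram) : μ.colLen 0 ≤ μ.card := by
  rw [μ.colLen_eq_card]
  exact card_le_card (filter_subset _ _)

lemma yg_rowLen_le_card (μ : YoungDiagram) (i : ℕ) : μ.rowLen i ≤ μ.card := by
  rw [μ.rowLen_eq_card]
  exact card_le_card (filter_subset _ _)

lemma yg_lt_card_of_mem {μ : YoungDiagram} {i : ℕ} (h : (i, 0) ∈ μ) : i < μ.card :=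
  lt_of_lt_of_le (YoungDiagram.mem_iff_lt_colLen.mp h) (yg_colLen_le_card μ)

lemma yg_lt_card_of_rowLen_pos {μ : YoungDiagram} {i : ℕ} (h : 0 < μ.rowLen i) : i < μ.card :=
  yg_lt_card_of_mem (YoungDiagram.mem_iff_lt_rowLen.mpr h)

lemma mem_removable_iff {μ : YoungDiagram} {i j : ℕ} :
    (i, j) ∈ removableCells μ ↔ j + 1 = μ.rowLen i ∧ μ.rowLen (i + 1) ≤ j := by
  simp only [removableCells, mem_filter, YoungDiagram.mem_cells,
    YoungDiagram.mem_iff_lt_rowLen]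
  omega

lemma mem_addable_iff {μ : YoungDiagram} {i j : ℕ} :
    (i, j) ∈ addableCells μ ↔ j = μ.rowLen i ∧ (i = 0 ∨ μ.rowLen i < μ.rowLen (i - 1)) := by
  have h1 := yg_rowLen_le_card μ i
  simp only [addableCells, mem_filter, mem_product, mem_range, YoungDiagram.mem_cells,
    YoungDiagram.mem_iff_lt_rowLen]
  by_cases hlt : μ.rowLen i < μ.rowLen (i - 1)
  · have h2 : i - 1 < μ.card := yg_lt_card_of_rowLen_pos (by omega)
    omega
  · omega

end YGAux

section Rows

def Rrows (μ : YoungDiagram) : Finset ℕ :=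
  (Finset.range μ.card).filter fun i => μ.rowLen (i + 1) < μ.rowLen i

def Arows (μ : YoungDiagram) : Finset ℕ :=
  (Finset.range (μ.card + 1)).filter fun i => i = 0 ∨ μ.rowLen i < μ.rowLen (i - 1)

lemma removable_eq_image (μ : YoungDiagram) :
    removableCells μ = (Rrows μ).image fun i => (i, μ.rowLen i - 1) := by
  ext ⟨i, j⟩
  simp only [mem_image, mem_removable_iff, Rrows, mem_filter, mem_range, Prod.mk.injEq]
  constructor
  · rintro ⟨hj, hnext⟩
    have hi : i < μ.card := yg_lt_card_of_rowLen_pos (μ := μ) (i := i) (by omega)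
    exact ⟨i, ⟨hi, by omega⟩, rfl, by omega⟩
  · rintro ⟨i', ⟨hi', hlt⟩, rfl, rfl⟩
    omega

lemma addable_eq_image (μ : YoungDiagram) :
    addableCells μ = (Arows μ).image fun i => (i, μ.rowLen i) := by
  ext ⟨i, j⟩
  simp only [mem_image, mem_addable_iff, Arows, mem_filter, mem_range, Prod.mk.injEq]
  constructor
  · rintro ⟨hj, hd⟩
    have hi : i ≤ μ.card := by
      rcases hd with h0 | hlt
      · omega
      · have := yg_lt_card_of_rowLen_pos (μ := μ) (i := i - 1) (by omega)
        omega
    exact ⟨i, ⟨by omega, hd⟩, rfl, hj.symm⟩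
  · rintro ⟨i', ⟨hi', hd⟩, rfl, rfl⟩
    exact ⟨rfl, hd⟩

lemma pair_injOn {f : ℕ → ℕ} {s : Finset ℕ} : Set.InjOn (fun i => (i, f i)) ↑s := by
  intro a _ b _ h
  simpa using congrArg Prod.fst h

lemma card_removable (μ : YoungDiagram) : (removableCells μ).card = (Rrows μ).card := by
  rw [removable_eq_image, card_image_of_injOn pair_injOn]

lemma card_addable (μ : YoungDiagram) : (addableCells μ).card = (Arows μ).card := by
  rw [addable_eq_image, card_image_of_injOn pair_injOn]

lemma sum_content_removable (μ : YoungDiagram) :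
    ∑ c ∈ removableCells μ, content c = ∑ i ∈ Rrows μ, ((μ.rowLen i : ℤ) - 1 - i) := by
  rw [removable_eq_image, sum_image pair_injOn]
  refine sum_congr rfl fun i hi => ?_
  have hpos : 0 < μ.rowLen i := by
    simp only [Rrows, mem_filter, mem_range] at hi
    omega
  simp only [content_mk]
  omega

lemma sum_content_addable (μ : YoungDiagram) :
    ∑ c ∈ addableCells μ, content c = ∑ i ∈ Arows μ, ((μ.rowLen i : ℤ) - i) := by
  rw [addable_eq_image, sum_image pair_injOn]
  refine sum_congr rfl fun i _ => ?_
  simp only [content_mk]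

lemma Arows_eq (μ : YoungDiagram) : Arows μ = insert 0 ((Rrows μ).image Nat.succ) := by
  ext i
  simp only [Arows, Rrows, mem_insert, mem_image, mem_filter, mem_range]
  constructor
  · rintro ⟨hi, h0 | hlt⟩
    · exact Or.inl h0
    · rcases Nat.eq_zero_or_pos i with rfl | hpos
      · exact Or.inl rfl
      · right
        refine ⟨i - 1, ⟨?_, ?_⟩, by omega⟩
        · have := yg_lt_card_of_rowLen_pos (μ := μ) (i := i - 1) (by omega)
          omega
        · have h : i - 1 + 1 = i := by omega
          rw [h]
          exact hlt
  · rintro (rfl | ⟨i', ⟨hi', hlt⟩, rfl⟩)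
    · exact ⟨by omega, Or.inl rfl⟩
    · refine ⟨by omega, Or.inr ?_⟩
      simpa using hlt

lemma card_addable_eq (μ : YoungDiagram) :
    (addableCells μ).card = (removableCells μ).card + 1 := by
  rw [card_addable, card_removable, Arows_eq,
    card_insert_of_notMem (by simp), card_image_of_injective _ Nat.succ_injective]

lemma yg_rowLen_card_eq_zero (μ : YoungDiagram) : μ.rowLen μ.card = 0 := by
  by_contra hne
  have := yg_lt_card_of_rowLen_pos (μ := μ) (i := μ.card) (Nat.pos_of_ne_zero hne)
  omega

lemma sum_contents_eq (μ : YoungDiagram) :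
    ∑ c ∈ addableCells μ, content c = ∑ c ∈ removableCells μ, content c := by
  rw [sum_content_addable, sum_content_removable, Arows_eq]
  rw [sum_insert (by simp), sum_image (fun a _ b _ h => Nat.succ_injective h)]
  have tel : ∑ i ∈ Finset.range μ.card, ((μ.rowLen i : ℤ) - (μ.rowLen (i + 1) : ℤ))
      = (μ.rowLen 0 : ℤ) - (μ.rowLen μ.card : ℤ) :=
    Finset.sum_range_sub' (fun i => (μ.rowLen i : ℤ)) μ.card
  have hR : ∑ i ∈ Rrows μ, ((μ.rowLen i : ℤ) - (μ.rowLen (i + 1) : ℤ)) = (μ.rowLen 0 : ℤ) := by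
    rw [Rrows]
    rw [Finset.sum_subset (Finset.filter_subset _ _) (fun i hi hni => ?_)]
    · rw [tel, yg_rowLen_card_eq_zero]
      simp
    · simp only [mem_filter, mem_range] at hni
      have hanti := μ.rowLen_anti i (i + 1) (by omega)
      have hmem := Finset.mem_range.mp hi
      have : μ.rowLen (i + 1) = μ.rowLen i := by omega
      rw [this]
      ring
  have hsplit : ∑ i ∈ Rrows μ, ((μ.rowLen i : ℤ) - 1 - i)
      - ∑ i ∈ Rrows μ, ((μ.rowLen (Nat.succ i) : ℤ) - (Nat.succ i : ℕ))
      = ∑ i ∈ Rrows μ, ((μ.rowLen i : ℤ) - (μ.rowLen (i + 1) : ℤ)) := by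
    rw [← Finset.sum_sub_distrib]
    refine sum_congr rfl fun i _ => ?_
    push_cast [Nat.succ_eq_add_one]
    ring
  rw [hR] at hsplit
  push_cast at hsplit ⊢
  linarith [hsplit]

lemma removable_content_injOn (μ : YoungDiagram) :
    Set.InjOn content ↑(removableCells μ) := by
  rintro ⟨i, j⟩ hij ⟨i', j'⟩ hij' hc
  simp only [Finset.mem_coe, mem_removable_iff] at hij hij'
  simp only [content_mk] at hc
  rcases lt_trichotomy i i' with h | h | h
  · exfalso
    have := μ.rowLen_anti (i + 1) i' (by omega)
    omega
  · subst h
    have : j = j' := by omega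
    rw [this]
  · exfalso
    have := μ.rowLen_anti (i' + 1) i (by omega)
    omega

lemma addable_content_injOn (μ : YoungDiagram) :
    Set.InjOn content ↑(addableCells μ) := by
  rintro ⟨i, j⟩ hij ⟨i', j'⟩ hij' hc
  simp only [Finset.mem_coe, mem_addable_iff] at hij hij'
  simp only [content_mk] at hc
  obtain ⟨hj, hd⟩ := hij
  obtain ⟨hj', hd'⟩ := hij'
  rcases lt_trichotomy i i' with h | h | h
  · exfalso
    have h1 := μ.rowLen_anti i i' (le_of_lt h)
    rcases hd' with h0 | hlt
    · omega
    · have h2 := μ.rowLen_anti i (i' - 1) (by omega)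
      omega
  · subst h
    have : j = j' := by omega
    rw [this]
  · exfalso
    have h1 := μ.rowLen_anti i' i (le_of_lt h)
    rcases hd with h0 | hlt
    · omega
    · have h2 := μ.rowLen_anti i' (i - 1) (by omega)
      omega

lemma content_ne_of_addable_removable (μ : YoungDiagram) {a r : ℕ × ℕ}
    (ha : a ∈ addableCells μ) (hr : r ∈ removableCells μ) : content a ≠ content r := by
  obtain ⟨i, j⟩ := a
  obtain ⟨i', j'⟩ := r
  rw [mem_addable_iff] at ha
  rw [mem_removable_iff] at hr
  simp only [content_mk]
  rcases le_or_gt i i' with h | h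
  · have := μ.rowLen_anti i i' h
    omega
  · have := μ.rowLen_anti (i' + 1) i h
    omega

lemma removable_nonempty {μ : YoungDiagram} (h : 0 < μ.card) :
    (removableCells μ).Nonempty := by
  have h00 : (0, 0) ∈ μ := by
    obtain ⟨c, hc⟩ := Finset.card_pos.mp h
    exact μ.up_left_mem (Nat.zero_le _) (Nat.zero_le _) ((YoungDiagram.mem_cells _).mp hc)
  have hcl : 0 < μ.colLen 0 := YoungDiagram.mem_iff_lt_colLen.mp h00
  set i := μ.colLen 0 - 1 with hidef
  have h1 : 0 < μ.rowLen i :=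
    YoungDiagram.mem_iff_lt_rowLen.mp (YoungDiagram.mem_iff_lt_colLen.mpr (by omega))
  have h2 : μ.rowLen (i + 1) = 0 := by
    by_contra hne
    have hm : (i + 1, 0) ∈ μ := YoungDiagram.mem_iff_lt_rowLen.mpr (Nat.pos_of_ne_zero hne)
    have := YoungDiagram.mem_iff_lt_colLen.mp hm
    omega
  exact ⟨(i, μ.rowLen i - 1), mem_removable_iff.mpr (by omega)⟩

lemma exists_added (μ l : YoungDiagram) (h : Covers μ l) :
    ∃ a, a ∈ addableCells μ ∧ addedContent μ l = content a := by
  obtain ⟨hle, hcard⟩ := h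
  have hsub : μ.cells ⊆ l.cells := YoungDiagram.cells_subset_iff.mpr hle
  have hcard' : l.cells.card = μ.cells.card + 1 := hcard
  have h1 : (l.cells \ μ.cells).card = 1 := by
    rw [card_sdiff_of_subset hsub]
    omega
  obtain ⟨a, ha⟩ := Finset.card_eq_one.mp h1
  obtain ⟨i, j⟩ := a
  have hmem : (i, j) ∈ l.cells \ μ.cells := ha ▸ mem_singleton_self _
  have hal : (i, j) ∈ l := (YoungDiagram.mem_cells _).mp (mem_sdiff.mp hmem).1
  have haμ : (i, j) ∉ μ := fun hm => (mem_sdiff.mp hmem).2 ((YoungDiagram.mem_cells _).mpr hm)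
  have hother : ∀ c, c ∈ l → c ≠ (i, j) → c ∈ μ := by
    intro c hc hne
    by_contra hcm
    have hcmem : c ∈ l.cells \ μ.cells :=
      mem_sdiff.mpr ⟨(YoungDiagram.mem_cells _).mpr hc, fun hm => hcm ((YoungDiagram.mem_cells _).mp hm)⟩
    rw [ha, mem_singleton] at hcmem
    exact hne hcmem
  have hge : μ.rowLen i ≤ j := by
    by_contra hlt
    exact haμ (YoungDiagram.mem_iff_lt_rowLen.mpr (by omega))
  have hj : j = μ.rowLen i := by
    rcases eq_or_lt_of_le hge with heq | hlt
    · exact heq.symm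
    · exfalso
      have hj1 : (i, j - 1) ∈ l := l.up_left_mem le_rfl (by omega) hal
      have hj2 : (i, j - 1) ∈ μ := hother _ hj1 (by simp; omega)
      have := YoungDiagram.mem_iff_lt_rowLen.mp hj2
      omega
  have hcond : i = 0 ∨ μ.rowLen i < μ.rowLen (i - 1) := by
    rcases Nat.eq_zero_or_pos i with rfl | hpos
    · exact Or.inl rfl
    · right
      have h1' : (i - 1, j) ∈ l := l.up_left_mem (by omega) le_rfl hal
      have h2' : (i - 1, j) ∈ μ := hother _ h1' (by simp; omega)
      have := YoungDiagram.mem_iff_lt_rowLen.mp h2'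
      omega
  refine ⟨(i, j), mem_addable_iff.mpr ⟨hj, hcond⟩, ?_⟩
  rw [addedContent, ha, sum_singleton]

end Rows

end
end DDAux

/-- Value of the right-turn (dot) element: for `μ ⋖ λ`,
`|μ| · ∑_{ν : ν ⋖ μ} p↓(μ,ν)/(c(λ/μ) - c(μ/ν)) = c(λ/μ)`, i.e.
`H_μ(c(λ/μ)) = 0`. The sum over diagrams `ν` covered by `μ` is written as a sum
over the removable cells of `μ`. -/
theorem stmt16 (μ l : YoungDiagram) (h : Covers μ l) :
    (μ.card : ℝ) *
        ∑ r ∈ removableCells μ,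
          pDownAt μ (content r) / ((addedContent μ l : ℝ) - (content r : ℝ)) =
      (addedContent μ l : ℝ) := by
  classical
  obtain ⟨a₀, haadd, hx⟩ := exists_added μ l h
  by_cases hc0 : μ.card = 0
  · obtain ⟨i, j⟩ := a₀
    rw [mem_addable_iff] at haadd
    have hr0 : ∀ k, μ.rowLen k = 0 := fun k => Nat.le_zero.mp (hc0 ▸ yg_rowLen_le_card μ k)
    have hi : i = 0 := by
      rcases haadd.2 with h0 | hlt
      · exact h0
      · rw [hr0, hr0] at hlt
        omega
    have hj : j = 0 := by rw [haadd.1, hr0]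
    rw [hx]
    subst hi hj
    have hc00 : content (0 : ℕ × ℕ) = 0 := rfl
    simp [hc0, hc00, content_mk]
  · have hcpos : 0 < μ.card := Nat.pos_of_ne_zero hc0
    have hcne : (μ.card : ℝ) ≠ 0 := Nat.cast_ne_zero.mpr hc0
    set x : ℝ := (addedContent μ l : ℝ) with hxdef
    have hne : ∀ r ∈ removableCells μ, x - (content r : ℝ) ≠ 0 := by
      intro r hr
      rw [hxdef, hx, sub_ne_zero]
      exact_mod_cast content_ne_of_addable_removable μ haadd hr
    have hterm : ∀ r ∈ removableCells μ,
        pDownAt μ (content r) / (x - (content r : ℝ))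
          = (1 / (μ.card : ℝ)) *
            ((∏ a ∈ (addableCells μ).erase a₀, ((content r : ℝ) - (content a : ℝ))) /
              (∏ r' ∈ (removableCells μ).erase r, ((content r : ℝ) - (content r' : ℝ)))) := by
      intro r hr
      have hfilter : (removableCells μ).filter (fun r' => content r' ≠ content r)
          = (removableCells μ).erase r := by
        ext r'
        simp only [mem_filter, mem_erase]
        constructor
        · rintro ⟨h1, h2⟩
          exact ⟨fun he => h2 (he ▸ rfl), h1⟩
        · rintro ⟨h1, h2⟩
          exact ⟨h2, fun he => h1 (removable_content_injOn μ h2 hr he)⟩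
      have hprod : ∏ a ∈ addableCells μ, ((content r : ℝ) - (content a : ℝ))
          = ((content r : ℝ) - x) *
            ∏ a ∈ (addableCells μ).erase a₀, ((content r : ℝ) - (content a : ℝ)) := by
        rw [hxdef, hx]
        exact (Finset.mul_prod_erase _ _ haadd).symm
      rw [pDownAt, hfilter, hprod]
      set T := ∏ a ∈ (addableCells μ).erase a₀, ((content r : ℝ) - (content a : ℝ))
      set D := ∏ r' ∈ (removableCells μ).erase r, ((content r : ℝ) - (content r' : ℝ))
      have hinv : (x - (content r : ℝ)) * (x - (content r : ℝ))⁻¹ = 1 :=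
        mul_inv_cancel₀ (hne r hr)
      rw [div_eq_mul_inv _ (x - (content r : ℝ)), div_eq_mul_inv _ D, div_eq_mul_inv T D]
      linear_combination ((1 / (μ.card : ℝ)) * T * D⁻¹) * hinv
    rw [Finset.sum_congr rfl hterm, ← Finset.mul_sum, ← mul_assoc,
      mul_one_div_cancel hcne, one_mul]
    have hcards : ((addableCells μ).erase a₀).card = (removableCells μ).card := by
      rw [card_erase_of_mem haadd, card_addable_eq]
      omega
    have hdd := dd_aux (removableCells μ) ((addableCells μ).erase a₀)
      (fun c => (content c : ℝ)) (fun c => (content c : ℝ))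
      (fun c hc c' hc' hcc => removable_content_injOn μ hc hc' (by
        simp only at hcc
        exact_mod_cast hcc))
      hcards (removable_nonempty hcpos)
    rw [hdd]
    have hsum_erase : ∑ a ∈ (addableCells μ).erase a₀, (content a : ℝ)
        = (∑ a ∈ addableCells μ, (content a : ℝ)) - (content a₀ : ℝ) := by
      rw [← Finset.sum_erase_add _ _ haadd]
      ring
    have hB : (∑ a ∈ addableCells μ, (content a : ℝ))
        = ∑ r ∈ removableCells μ, (content r : ℝ) := by
      exact_mod_cast sum_contents_eq μ
    rw [hsum_erase, hB, hxdef, hx]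
    ring
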